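/- Let δ ∈ (0,1) be real, and let u, v, w ∈ ℝ² satisfy max{dist(u,v), dist(v,w)} < dist(w,u) and dist(w,u) ≤ (1 − δ/2)·(dist(u,v) + dist(v,w)). Set δ₁ = 2·arcsin(δ/(4 − 2δ)). Then u, v, w are not collinear, the angles at w and at u satisfy ∠ v w u ≥ δ₁ and ∠ w u v ≥ δ₁, and the angle at v satisfies ∠ u v w ≤ π − 2δ₁. -/

import Mathlib

open EuclideanGeometry Real

private lemma aux_poly (δ t x y c : ℝ) (hδ0 : 0 < δ) (hδ1 : δ < 1)
    (ht : t = δ / (4 - 2 * δ)) (hx : 0 < x) (hy : 0 < y) (hxc : x < c) (hyc : y < c)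
    (hsum : c ≤ (1 - δ / 2) * (x + y)) :
    y ^ 2 + c ^ 2 - x ^ 2 ≤ (1 - 2 * t ^ 2) * (2 * y * c) := by
  have h2δ : (0:ℝ) < 2 - δ := by linarith
  have h42 : (0:ℝ) < 4 - 2 * δ := by linarith
  have hc0 : 0 < c := lt_trans hx hxc
  have htδ : t * (4 - 2 * δ) = δ := by rw [ht, div_mul_cancel₀ _ h42.ne']
  have hδsq : δ ^ 2 = 4 * t ^ 2 * (2 - δ) ^ 2 := by nlinarith [htδ]
  have ht0 : 0 ≤ t := by
    have : 0 ≤ δ / (4 - 2 * δ) := le_of_lt (div_pos hδ0 h42)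
    rw [ht]; exact this
  have e1 : (2 - δ) * (x + y - c) ≥ δ * c := by nlinarith
  have e2 : (2 - δ) * (x + c - y) ≥ δ * c := by nlinarith
  have hprod : (2 - δ)^2 * ((x + y - c) * (x + c - y)) ≥ δ^2 * c^2 := by
    nlinarith [mul_le_mul e1 e2 (mul_nonneg hδ0.le hc0.le) (by nlinarith : (0:ℝ) ≤ (2 - δ) * (x + y - c))]
  have hK : (x + y - c) * (x + c - y) ≥ 4 * t^2 * (y * c) := by
    have hyc2 : (0:ℝ) ≤ c^2 - y*c := by nlinarith
    have hnn : (0:ℝ) ≤ (2 - δ)^2 * (4 * t^2 * (c^2 - y*c)) := by positivity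
    nlinarith [sq_nonneg (2 - δ), mul_pos h2δ h2δ]
  nlinarith [hK]

theorem nondegenerate_triangle_angles (δ : ℝ) (hδ : δ ∈ Set.Ioo (0:ℝ) 1)
    (u v w : EuclideanSpace ℝ (Fin 2))
    (hmax : max (dist u v) (dist v w) < dist w u)
    (h2 : dist w u ≤ (1 - δ / 2) * (dist u v + dist v w)) :
    ¬ Collinear ℝ ({u, v, w} : Set (EuclideanSpace ℝ (Fin 2))) ∧
    2 * Real.arcsin (δ / (4 - 2 * δ)) ≤ EuclideanGeometry.angle v w u ∧
    2 * Real.arcsin (δ / (4 - 2 * δ)) ≤ EuclideanGeometry.angle w u v ∧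
    EuclideanGeometry.angle u v w ≤ π - 2 * (2 * Real.arcsin (δ / (4 - 2 * δ))) := by
  obtain ⟨hδ0, hδ1⟩ := hδ
  have hac : dist u v < dist w u := (le_max_left _ _).trans_lt hmax
  have hbc : dist v w < dist w u := (le_max_right _ _).trans_lt hmax
  have ha0 : 0 < dist u v := by
    rcases (dist_nonneg : (0:ℝ) ≤ dist u v).lt_or_eq with h | h
    · exact h
    · exfalso
      have huv : u = v := by rwa [eq_comm, dist_eq_zero] at h
      rw [huv, dist_comm] at hbc
      exact absurd hbc (lt_irrefl _)
  have hb0 : 0 < dist v w := by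
    rcases (dist_nonneg : (0:ℝ) ≤ dist v w).lt_or_eq with h | h
    · exact h
    · exfalso
      have hvw : v = w := by rwa [eq_comm, dist_eq_zero] at h
      rw [← hvw, dist_comm] at hac
      exact absurd hac (lt_irrefl _)
  have hc0 : 0 < dist w u := lt_trans ha0 hac
  set t := δ / (4 - 2 * δ) with ht
  have h42 : (0:ℝ) < 4 - 2 * δ := by linarith
  have ht0 : 0 < t := div_pos hδ0 h42
  have ht2 : t < 1/2 := by rw [ht, div_lt_iff₀ h42]; linarith
  have hcosD : Real.cos (2 * Real.arcsin t) = 1 - 2 * t ^ 2 := by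
    rw [Real.cos_two_mul, Real.cos_arcsin]
    rw [sq_sqrt (by nlinarith : (0:ℝ) ≤ 1 - t ^ 2)]
    ring
  have hDmem : 2 * Real.arcsin t ∈ Set.Icc (0:ℝ) π := by
    constructor
    · have := Real.arcsin_nonneg.2 ht0.le
      linarith
    · have := Real.arcsin_le_pi_div_two t
      linarith
  have hangle : ∀ (p q r : EuclideanSpace ℝ (Fin 2)),
      Real.cos (EuclideanGeometry.angle p q r) ≤ 1 - 2 * t ^ 2 →
      2 * Real.arcsin t ≤ EuclideanGeometry.angle p q r := by
    intro p q r hcos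
    by_contra hlt
    push_neg at hlt
    have := Real.strictAntiOn_cos ⟨EuclideanGeometry.angle_nonneg p q r,
      EuclideanGeometry.angle_le_pi p q r⟩ hDmem hlt
    rw [hcosD] at this
    linarith
  -- angle at w
  have hw : 2 * Real.arcsin t ≤ EuclideanGeometry.angle v w u := by
    apply hangle
    have hlaw := EuclideanGeometry.law_cos v w u
    rw [dist_comm v u, dist_comm u w] at hlaw
    have haux := aux_poly δ t (dist u v) (dist v w) (dist w u) hδ0 hδ1 ht ha0 hb0 hac hbc h2
    nlinarith [hlaw, haux, mul_pos hb0 hc0]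
  -- angle at u
  have hu : 2 * Real.arcsin t ≤ EuclideanGeometry.angle w u v := by
    apply hangle
    have hlaw := EuclideanGeometry.law_cos w u v
    rw [dist_comm w v, dist_comm v u] at hlaw
    have haux := aux_poly δ t (dist v w) (dist u v) (dist w u) hδ0 hδ1 ht hb0 ha0 hbc hac
      (by linarith)
    nlinarith [hlaw, haux, mul_pos ha0 hc0]
  have hvu : v ≠ u := by
    intro h; rw [h, dist_self] at ha0; exact absurd ha0 (lt_irrefl _)
  have hwu : w ≠ u := by
    intro h; rw [h, dist_self] at hc0; exact absurd hc0 (lt_irrefl _)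
  have hsum := EuclideanGeometry.angle_add_angle_add_angle_eq_pi (p₁ := u) (p₂ := v) (p₃ := w)
    hvu
  refine ⟨?_, hw, hu, ?_⟩
  · intro hcol
    rcases hcol.wbtw_or_wbtw_or_wbtw with h | h | h
    · have hd := h.dist_add_dist
      rw [dist_comm u w] at hd
      nlinarith
    · have hd := h.dist_add_dist
      rw [dist_comm v u] at hd
      linarith
    · have hd := h.dist_add_dist
      rw [dist_comm w v] at hd
      linarith
  · linarith
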